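/- Let $(A,\circ_A)$ be a Zinbiel algebra. Then $A\oplus A^*$ with product $(x+\xi)\circ(y+\eta) = x\circ_A y + (-L_x^*-R_x^*)\eta + R_y^*\xi$ is a Zinbiel algebra, and the bilinear form $\omega(x+\xi, y+\eta) = \langle\xi,y\rangle - \langle\eta,x\rangle$ is nondegenerate, skew-symmetric, and satisfies the invariance condition $\omega(u\circ v, w) = \omega(v, u\circ w + w\circ u)$; moreover $A$ and $A^*$ are isotropic subalgebras. Hence $(A\ltimes A^*, A, A^*)$ is a Manin triple of Zinbiel algebras. -/
import Mathlib


/-- The Zinbiel product on `A ⊕ A*`: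
`(x + ξ) ∘ (y + η) = x ∘ y + (-L_x* - R_x*)η + R_y* ξ`, where
`⟨L_x* ξ, y⟩ = -⟨ξ, x ∘ y⟩` and `⟨R_x* ξ, y⟩ = -⟨ξ, y ∘ x⟩`. -/
def zinbielDoubleMul {K : Type*} [Field K] {A : Type*} [AddCommGroup A] [Module K A]
    (mul : A →ₗ[K] A →ₗ[K] A) (p q : A × Module.Dual K A) : A × Module.Dual K A :=
  (mul p.1 q.1, q.2 ∘ₗ mul p.1 + q.2 ∘ₗ mul.flip p.1 - p.2 ∘ₗ mul.flip q.1)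

/-- The natural skew-symmetric bilinear form `ω(x + ξ, y + η) = ⟨ξ, y⟩ - ⟨η, x⟩` on `A ⊕ A*`. -/
def zinbielDoubleForm {K : Type*} [Field K] {A : Type*} [AddCommGroup A] [Module K A]
    (p q : A × Module.Dual K A) : K :=
  p.2 q.1 - q.2 p.1

/-- For a Zinbiel algebra `(A, ∘)`, the space `A ⊕ A*` with the product
`(x + ξ) ∘ (y + η) = x ∘ y + (-L_x* - R_x*)η + R_y* ξ` is a Zinbiel algebra; the bilinear
form `ω(x + ξ, y + η) = ⟨ξ, y⟩ - ⟨η, x⟩` is skew-symmetric, nondegenerate and invariant;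
and `A`, `A*` are isotropic subalgebras. Hence `(A ⋉ A*, A, A*)` is a Manin triple of
Zinbiel algebras. -/
theorem zinbiel_manin_triple_semidirect {K : Type*} [Field K] {A : Type*} [AddCommGroup A]
    [Module K A] [FiniteDimensional K A]
    (mul : A →ₗ[K] A →ₗ[K] A)
    (hZ : ∀ x y z : A, mul x (mul y z) = mul (mul x y + mul y x) z) :
    (∀ p q w : A × Module.Dual K A,
      zinbielDoubleMul mul p (zinbielDoubleMul mul q w)
        = zinbielDoubleMul mul (zinbielDoubleMul mul p q + zinbielDoubleMul mul q p) w) ∧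
    (∀ p q : A × Module.Dual K A, zinbielDoubleForm p q = -zinbielDoubleForm q p) ∧
    (∀ p : A × Module.Dual K A,
      (∀ q : A × Module.Dual K A, zinbielDoubleForm p q = 0) → p = 0) ∧
    (∀ p q w : A × Module.Dual K A,
      zinbielDoubleForm (zinbielDoubleMul mul p q) w
        = zinbielDoubleForm q (zinbielDoubleMul mul p w + zinbielDoubleMul mul w p)) ∧
    (∀ x y : A, zinbielDoubleForm ((x, 0) : A × Module.Dual K A) (y, 0) = 0) ∧
    (∀ ξ η : Module.Dual K A, zinbielDoubleForm ((0, ξ) : A × Module.Dual K A) (0, η) = 0) ∧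
    (∀ x y : A, (zinbielDoubleMul mul ((x, 0) : A × Module.Dual K A) (y, 0)).2 = 0) ∧
    (∀ ξ η : Module.Dual K A,
      (zinbielDoubleMul mul ((0, ξ) : A × Module.Dual K A) (0, η)).1 = 0) := by
  refine ⟨?_, ?_, ?_, ?_, ?_, ?_, ?_, ?_⟩
  · intro p q w
    obtain ⟨x, ξ⟩ := p; obtain ⟨y, η⟩ := q; obtain ⟨z, ζ⟩ := w
    refine Prod.ext (hZ x y z) ?_
    ext a
    simp only [zinbielDoubleMul, LinearMap.add_apply, LinearMap.sub_apply,
      LinearMap.comp_apply, LinearMap.flip_apply, Prod.fst_add, Prod.snd_add,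
      map_add, hZ]
    ring
  · intro p q
    simp only [zinbielDoubleForm]; ring
  · intro p h
    obtain ⟨x, ξ⟩ := p
    have h1 : ξ = 0 := by
      ext y
      simpa [zinbielDoubleForm] using h (y, 0)
    have h2 : x = 0 := by
      rw [← Module.forall_dual_apply_eq_zero_iff K]
      intro η
      have := h (0, η)
      simpa [zinbielDoubleForm] using this
    simp [h1, h2]
  · intro p q w
    obtain ⟨x, ξ⟩ := p; obtain ⟨y, η⟩ := q; obtain ⟨z, ζ⟩ := w
    simp only [zinbielDoubleForm, zinbielDoubleMul, LinearMap.add_apply,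
      LinearMap.sub_apply, LinearMap.comp_apply, LinearMap.flip_apply,
      Prod.fst_add, Prod.snd_add, map_add]
    ring
  · intro x y; simp [zinbielDoubleForm]
  · intro ξ η; simp [zinbielDoubleForm]
  · intro x y; simp [zinbielDoubleMul]
  · intro ξ η; simp [zinbielDoubleMul]
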